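/- Let G be a finitely generated group and ψ : G → ℤ × ℤ a surjective group homomorphism whose kernel K is finitely generated. Assume that the abelianization of G has free rank two, i.e., the ℚ-vector space obtained by tensoring the abelianization of G with ℚ is two-dimensional. Then the commutator subgroup [G, G] has finite index in K, and in particular [G, G] is finitely generated. -/

import Mathlib

open TensorProduct

theorem stepA {M : Type*} [AddCommGroup M] [Module.Finite ℤ M]
    (g : M →ₗ[ℤ] ℤ × ℤ) (hg : Function.Surjective g)
    (hrank : Module.finrank ℚ (ℚ ⊗[ℤ] M) = 2) :
    Finite (LinearMap.ker g) := by
  have hloc : IsLocalizedModule (nonZeroDivisors ℤ) (TensorProduct.mk ℤ ℚ M 1) :=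
    (isLocalizedModule_iff_isBaseChange (nonZeroDivisors ℤ) ℚ _).mpr
      (TensorProduct.isBaseChange ℤ M ℚ)
  have hrk : Module.rank ℚ (ℚ ⊗[ℤ] M) = Module.rank ℤ M :=
    (IsLocalization.rank_eq ℚ (nonZeroDivisors ℤ) le_rfl).trans
      (@IsLocalizedModule.rank_eq _ _ _ _ _ (nonZeroDivisors ℤ) le_rfl _ _ _ (TensorProduct.mk ℤ ℚ M 1) hloc)
  have hM2 : Module.rank ℤ M = 2 := by
    rw [← hrk, ← Module.finrank_eq_rank, hrank]; norm_num
  have hq : Module.rank ℤ (M ⧸ LinearMap.ker g) = 2 := by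
    have h := (g.quotKerEquivOfSurjective hg).lift_rank_eq
    have h2 : Module.rank ℤ (ℤ × ℤ) = 2 := by simp [Module.rank_self]; norm_num
    rw [h2] at h
    simpa using h
  have h0 : Module.rank ℤ (LinearMap.ker g) = 0 := by
    have := rank_quotient_add_rank_of_isDomain (R := ℤ) (LinearMap.ker g)
    rw [hq, hM2] at this
    have h2 : (2 : Cardinal) < Cardinal.aleph0 := Cardinal.nat_lt_aleph0 2
    exact (Cardinal.eq_of_add_eq_add_left (by rw [this, add_zero]) h2)
  have htor : Module.IsTorsion ℤ (LinearMap.ker g) := by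
    intro x
    obtain ⟨a, ha, hax⟩ := rank_eq_zero_iff.mp h0 x
    exact ⟨⟨a, mem_nonZeroDivisors_of_ne_zero ha⟩, hax⟩
  have : Module.Finite ℤ (LinearMap.ker g) := Module.Finite.iff_fg.mpr
    (IsNoetherian.noetherian _)
  exact Module.finite_of_fg_torsion _ htor

/-- If `G` is a finitely generated group, `ψ : G → ℤ × ℤ` is a surjective homomorphism
with finitely generated kernel, and the abelianization of `G` has free rank two, then
the commutator subgroup `[G, G]` has finite index in `ker ψ`; in particular `[G, G]`
is finitely generated. -/
theorem stmt15 (G : Type*) [Group G] (hG : Group.FG G)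
    (ψ : G →* Multiplicative (ℤ × ℤ)) (hsurj : Function.Surjective ψ)
    (hker : Group.FG ↥ψ.ker)
    (hrank : Module.finrank ℚ (ℚ ⊗[ℤ] (Additive (Abelianization G))) = 2) :
    (commutator G).relIndex ψ.ker ≠ 0 ∧ Group.FG ↥(commutator G) := by
  classical
  have hle : commutator G ≤ ψ.ker := Abelianization.commutator_subset_ker ψ
  have hofsurj : Function.Surjective (Abelianization.of : G →* Abelianization G) := by
    intro x; exact Quotient.exists_rep x
  -- the induced map on abelianizations
  set f : Abelianization G →* Multiplicative (ℤ × ℤ) := Abelianization.lift ψ with hfdef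
  have hfof : ∀ x : G, f (Abelianization.of x) = ψ x := fun x => Abelianization.lift_apply_of ψ x
  have hfsurj : Function.Surjective f := by
    intro y; obtain ⟨x, hx⟩ := hsurj y; exact ⟨Abelianization.of x, by rw [hfof, hx]⟩
  -- additive/linear version
  have : Group.FG (Abelianization G) := Group.fg_of_surjective hofsurj
  have hMfg : AddGroup.FG (Additive (Abelianization G)) := GroupFG.iff_add_fg.mp this
  have hMfin : Module.Finite ℤ (Additive (Abelianization G)) :=
    Module.Finite.iff_addGroup_fg.mpr hMfg
  set g : Additive (Abelianization G) →+ ℤ × ℤ := MonoidHom.toAdditiveLeft f with hgdef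
  have hgsurj : Function.Surjective g.toIntLinearMap := hfsurj
  have hkerfin : Finite (LinearMap.ker g.toIntLinearMap) :=
    stepA g.toIntLinearMap hgsurj hrank
  have hfker : Finite (f.ker) := by
    refine Finite.of_equiv _ (⟨fun x => ⟨x.1, x.2⟩, fun x => ⟨x.1, x.2⟩, fun _ => rfl, fun _ => rfl⟩ :
      LinearMap.ker g.toIntLinearMap ≃ f.ker)
  -- the restriction of `of` to the kernel of ψ
  set φ : ψ.ker →* Abelianization G := (Abelianization.of).comp ψ.ker.subtype with hφdef
  have hkerφ : φ.ker = (commutator G).subgroupOf ψ.ker := by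
    ext x
    change Abelianization.of (x : G) = 1 ↔ _
    rw [Subgroup.mem_subgroupOf]
    exact QuotientGroup.eq_one_iff _
  have hrange : (φ.range : Set (Abelianization G)) ⊆ (f.ker : Set (Abelianization G)) := by
    rintro _ ⟨k, rfl⟩
    show f (Abelianization.of (k : G)) = 1
    rw [hfof]
    exact k.2
  have hrangefin : Finite φ.range := by
    have : (φ.range : Set (Abelianization G)).Finite :=
      Set.Finite.subset (Set.toFinite _) hrange
    exact this
  have hquotfin : Finite (ψ.ker ⧸ (commutator G).subgroupOf ψ.ker) := by
    rw [← hkerφ]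
    exact Finite.of_equiv _ (QuotientGroup.quotientKerEquivRange φ).symm.toEquiv
  have hidx : ((commutator G).subgroupOf ψ.ker).index ≠ 0 :=
    Subgroup.index_ne_zero_of_finite
  refine ⟨hidx, ?_⟩
  haveI : ((commutator G).subgroupOf ψ.ker).FiniteIndex := ⟨hidx⟩
  haveI : Group.FG ↥ψ.ker := hker
  haveI : Group.FG ↥((commutator G).subgroupOf ψ.ker) :=
    Subgroup.fg_of_index_ne_zero _
  exact Group.fg_of_surjective (f := (Subgroup.subgroupOfEquivOfLe hle).toMonoidHom)
    (Subgroup.subgroupOfEquivOfLe hle).surjective
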